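/- Let G be a pair of d-dimensional layer-permuted butterflies with left layer permutation π and right layer permutation σ; fix q ≤ d and m = d − q, with q ≥ 1. Suppose (one reused dimension) there is exactly one bit position i such that one of the following holds: (a) π(m+1) = σ(q) = i; (b) σ(q) = π(j) = i for some 1 ≤ j ≤ m+1 and π(m+1) ∉ {σ(q), …, σ(d)}; or (c) π(m+1) = σ(k) = i for some k ∈ {q, …, d} and σ(q) ∉ {π(1), …, π(m+1)}. Then for every connected component C of the q-dimensional sub-butterfly connectivity graph, the set of children of the vertices of C (each left vertex x* has children x0* and x1*, fixing bit π(m+1); each right vertex *y has children *0y and *1y, fixing bit σ(q)) splits into exactly two connected components of the (q−1)-dimensional sub-butterfly connectivity graph, determined by the value of bit i. -/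

import Mathlib

/-- A binary string of length `d`. -/
abbrev BStr (d : ℕ) := Fin d → Bool

/-- The string `b` lies in the left sub-butterfly `x*` of a pair of
`d`-dimensional layer-permuted butterflies with left layer permutation `π`
(written `0`-based): bit `π i` of `b` equals `x i` for all `i < m = d - q`. -/
def leftSubMem (d q : ℕ) (π : Equiv.Perm (Fin d))
    (x : Fin (d - q) → Bool) (b : BStr d) : Prop :=
  ∀ i : Fin (d - q), b (π (Fin.castLE (Nat.sub_le d q) i)) = x i

/-- The string `b` lies in the right sub-butterfly `*y` of a pair of
`d`-dimensional layer-permuted butterflies with right layer permutation `σ`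
(written `0`-based): bit `σ (q + j)` of `b` equals `y j` for all
`j < m = d - q`. -/
def rightSubMem (d q : ℕ) (hq : q ≤ d) (σ : Equiv.Perm (Fin d))
    (y : Fin (d - q) → Bool) (b : BStr d) : Prop :=
  ∀ j : Fin (d - q), b (σ (Fin.castLE (by omega) (Fin.natAdd q j))) = y j

/-- The left sub-butterfly `x*` and the right sub-butterfly `*y` share at least
one node on layer `d`. -/
def connRel (d q : ℕ) (hq : q ≤ d) (π σ : Equiv.Perm (Fin d))
    (x y : Fin (d - q) → Bool) : Prop :=
  ∃ b : BStr d, leftSubMem d q π x b ∧ rightSubMem d q hq σ y b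

/-- The `q`-dimensional sub-butterfly connectivity graph of a pair of
`d`-dimensional layer-permuted butterflies: a bipartite graph whose left
vertices (`Sum.inl`) are the `2^m` left sub-butterflies `x*` and whose right
vertices (`Sum.inr`) are the `2^m` right sub-butterflies `*y`, adjacent iff
the two sub-butterflies share a node on layer `d`. -/
def connGraph (d q : ℕ) (hq : q ≤ d) (π σ : Equiv.Perm (Fin d)) :
    SimpleGraph ((Fin (d - q) → Bool) ⊕ (Fin (d - q) → Bool)) where
  Adj u v :=
    (∃ x y, u = Sum.inl x ∧ v = Sum.inr y ∧ connRel d q hq π σ x y) ∨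
    (∃ x y, u = Sum.inr y ∧ v = Sum.inl x ∧ connRel d q hq π σ x y)
  symm := by
    constructor
    rintro u v (⟨x, y, rfl, rfl, h⟩ | ⟨x, y, rfl, rfl, h⟩)
    · exact Or.inr ⟨x, y, rfl, rfl, h⟩
    · exact Or.inl ⟨x, y, rfl, rfl, h⟩
  loopless := by
    constructor
    rintro u (⟨x, y, h1, h2, -⟩ | ⟨x, y, h1, h2, -⟩) <;> subst h1 <;> simp at h2

/-- The child `x0*` or `x1*` (according to `t`) of the left sub-butterfly `x*`:
the `(q-1)`-dimensional left sub-butterfly obtained by additionally fixing bit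
`π (m+1)` (`0`-based: `π m`, `m = d - q`) to the value `t`. -/
def childL (d q : ℕ) (x : Fin (d - q) → Bool) (t : Bool) :
    Fin (d - (q - 1)) → Bool :=
  fun i => if h : (i : ℕ) < d - q then x ⟨i, h⟩ else t

/-- The child `*0y` or `*1y` (according to `t`) of the right sub-butterfly
`*y`: the `(q-1)`-dimensional right sub-butterfly obtained by additionally
fixing bit `σ q` (`0`-based: `σ (q-1)`) to the value `t`. -/
def childR (d q : ℕ) (y : Fin (d - q) → Bool) (t : Bool) :
    Fin (d - (q - 1)) → Bool :=
  fun j => if h : 0 < (j : ℕ) then y ⟨(j : ℕ) - 1, by have := j.isLt; omega⟩ else t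

/-- The child (according to `t`) of a vertex of the `q`-dimensional
sub-butterfly connectivity graph, as a vertex of the `(q-1)`-dimensional one. -/
def childV (d q : ℕ) :
    ((Fin (d - q) → Bool) ⊕ (Fin (d - q) → Bool)) → Bool →
      ((Fin (d - (q - 1)) → Bool) ⊕ (Fin (d - (q - 1)) → Bool))
  | Sum.inl x, t => Sum.inl (childL d q x t)
  | Sum.inr y, t => Sum.inr (childR d q y t)

/-- The value of physical bit `i` on a left `(q-1)`-dimensional sub-butterfly
`x'` (entry `s` of `x'` fixes bit `π s`), when bit `i` is among the fixed
bits; junk value `false` otherwise. -/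
def bitValL (d q : ℕ) (π : Equiv.Perm (Fin d)) (i : Fin d)
    (x' : Fin (d - (q - 1)) → Bool) : Bool :=
  if h : ((π.symm i : Fin d) : ℕ) < d - (q - 1) then
    x' ⟨((π.symm i : Fin d) : ℕ), h⟩ else false

/-- The value of physical bit `i` on a right `(q-1)`-dimensional sub-butterfly
`y'` (entry `j` of `y'` fixes bit `σ ((q-1) + j)`), when bit `i` is among the
fixed bits; junk value `false` otherwise. -/
def bitValR (d q : ℕ) (σ : Equiv.Perm (Fin d)) (i : Fin d)
    (y' : Fin (d - (q - 1)) → Bool) : Bool :=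
  if h : q - 1 ≤ ((σ.symm i : Fin d) : ℕ) ∧
      ((σ.symm i : Fin d) : ℕ) - (q - 1) < d - (q - 1) then
    y' ⟨((σ.symm i : Fin d) : ℕ) - (q - 1), h.2⟩ else false

/-- The value of physical bit `i` on a vertex of the `(q-1)`-dimensional
sub-butterfly connectivity graph. -/
def bitVal (d q : ℕ) (π σ : Equiv.Perm (Fin d)) (i : Fin d) :
    ((Fin (d - (q - 1)) → Bool) ⊕ (Fin (d - (q - 1)) → Bool)) → Bool
  | Sum.inl x' => bitValL d q π i x'
  | Sum.inr y' => bitValR d q σ i y'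

namespace OneReused

/-- Bit `p` is fixed both by left `q'`-dimensional sub-butterflies and by
right ones ("shared"). -/
def shP (d q' : ℕ) (π σ : Equiv.Perm (Fin d)) (p : Fin d) : Prop :=
  ((π.symm p : Fin d) : ℕ) < d - q' ∧ q' ≤ ((σ.symm p : Fin d) : ℕ)

/-- The value of physical bit `p` on a vertex (junk `false` if unfixed). -/
def asg (d q' : ℕ) (π σ : Equiv.Perm (Fin d)) :
    ((Fin (d - q') → Bool) ⊕ (Fin (d - q') → Bool)) → Fin d → Bool
  | Sum.inl x => fun p =>
      if h : ((π.symm p : Fin d) : ℕ) < d - q' then x ⟨_, h⟩ else false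
  | Sum.inr y => fun p =>
      if h : q' ≤ ((σ.symm p : Fin d) : ℕ) then
        y ⟨((σ.symm p : Fin d) : ℕ) - q', by have := (σ.symm p).isLt; omega⟩
      else false

lemma connRel_iff (d q' : ℕ) (hq' : q' ≤ d) (π σ : Equiv.Perm (Fin d))
    (x y : Fin (d - q') → Bool) :
    connRel d q' hq' π σ x y ↔
      ∀ p, shP d q' π σ p →
        asg d q' π σ (Sum.inl x) p = asg d q' π σ (Sum.inr y) p := by
  constructor
  · rintro ⟨b, hL, hR⟩ p ⟨h1, h2⟩
    have e1 : π (Fin.castLE (Nat.sub_le d q')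
        (⟨((π.symm p : Fin d) : ℕ), h1⟩ : Fin (d - q'))) = p := by
      have : (Fin.castLE (Nat.sub_le d q')
          (⟨((π.symm p : Fin d) : ℕ), h1⟩ : Fin (d - q')) : Fin d) = π.symm p :=
        Fin.ext (by simp)
      rw [this, Equiv.apply_symm_apply]
    have hx := hL ⟨((π.symm p : Fin d) : ℕ), h1⟩
    rw [e1] at hx
    set j0 : Fin (d - q') :=
      ⟨((σ.symm p : Fin d) : ℕ) - q', by have := (σ.symm p).isLt; omega⟩ with hj0
    have e2 : σ (Fin.castLE (by omega) (Fin.natAdd q' j0)) = p := by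
      have : (Fin.castLE (by omega : q' + (d - q') ≤ d)
          (Fin.natAdd q' j0) : Fin d) = σ.symm p :=
        Fin.ext (by simp [hj0]; omega)
      rw [this, Equiv.apply_symm_apply]
    have hy := hR j0
    rw [e2] at hy
    simp only [asg, dif_pos h1, dif_pos h2, ← hx, ← hy]
    exact hy
  · intro H
    refine ⟨fun p =>
      if h1 : ((π.symm p : Fin d) : ℕ) < d - q' then x ⟨_, h1⟩
      else if h2 : q' ≤ ((σ.symm p : Fin d) : ℕ) then
        y ⟨((σ.symm p : Fin d) : ℕ) - q', by have := (σ.symm p).isLt; omega⟩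
      else false, ?_, ?_⟩
    · intro k
      simp only [Equiv.symm_apply_apply, Fin.coe_castLE]
      rw [dif_pos k.isLt]
    · intro j
      dsimp only
      have e : ((σ.symm (σ (Fin.castLE (by omega)
          (Fin.natAdd q' j))) : Fin d) : ℕ) = q' + (j : ℕ) := by
        simp [Equiv.symm_apply_apply]
      by_cases h1 : ((π.symm (σ (Fin.castLE (by omega)
          (Fin.natAdd q' j))) : Fin d) : ℕ) < d - q'
      · rw [dif_pos h1]
        have hsh : shP d q' π σ (σ (Fin.castLE (by omega) (Fin.natAdd q' j))) :=
          ⟨h1, by omega⟩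
        have hH := H _ hsh
        simp only [asg, dif_pos h1, dif_pos hsh.2] at hH
        rw [hH]
        congr 1
        exact Fin.ext (by simp only [e]; omega)
      · rw [dif_neg h1, dif_pos (show q' ≤ _ by omega)]
        congr 1
        exact Fin.ext (by simp only [e]; omega)

lemma adj_agree (d q' : ℕ) (hq' : q' ≤ d) (π σ : Equiv.Perm (Fin d)) {u v}
    (h : (connGraph d q' hq' π σ).Adj u v) :
    ∀ p, shP d q' π σ p → asg d q' π σ u p = asg d q' π σ v p := by
  rcases h with ⟨x, y, rfl, rfl, hc⟩ | ⟨x, y, rfl, rfl, hc⟩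
  · exact (connRel_iff d q' hq' π σ x y).mp hc
  · intro p hp; exact ((connRel_iff d q' hq' π σ x y).mp hc p hp).symm

/-- Canonical left vertex achieving a prescribed physical-bit assignment. -/
def mkL (d q' : ℕ) (π : Equiv.Perm (Fin d)) (g : Fin d → Bool) :
    Fin (d - q') → Bool :=
  fun k => g (π (Fin.castLE (Nat.sub_le d q') k))

lemma asg_mkL (d q' : ℕ) (π σ : Equiv.Perm (Fin d)) (g : Fin d → Bool)
    (p : Fin d) (h : ((π.symm p : Fin d) : ℕ) < d - q') :
    asg d q' π σ (Sum.inl (mkL d q' π g)) p = g p := by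
  simp only [asg, dif_pos h, mkL]
  congr 1
  have e : (Fin.castLE (Nat.sub_le d q')
      (⟨((π.symm p : Fin d) : ℕ), h⟩ : Fin (d - q')) : Fin d) = π.symm p :=
    Fin.ext (by simp)
  rw [e, Equiv.apply_symm_apply]

/-- Canonical right vertex achieving a prescribed physical-bit assignment. -/
def mkR (d q' : ℕ) (σ : Equiv.Perm (Fin d)) (g : Fin d → Bool) :
    Fin (d - q') → Bool :=
  fun j => g (σ ⟨q' + (j : ℕ), by have := j.isLt; omega⟩)

lemma asg_mkR (d q' : ℕ) (π σ : Equiv.Perm (Fin d)) (g : Fin d → Bool)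
    (p : Fin d) (h : q' ≤ ((σ.symm p : Fin d) : ℕ)) :
    asg d q' π σ (Sum.inr (mkR d q' σ g)) p = g p := by
  simp only [asg, dif_pos h, mkR]
  congr 1
  have e : (⟨q' + (((σ.symm p : Fin d) : ℕ) - q'),
      by have := (σ.symm p).isLt; omega⟩ : Fin d) = σ.symm p :=
    Fin.ext (by simp; omega)
  rw [e, Equiv.apply_symm_apply]

lemma reach_iff (d q' : ℕ) (hq' : q' ≤ d) (π σ : Equiv.Perm (Fin d)) (u v) :
    (connGraph d q' hq' π σ).Reachable u v ↔
      ∀ p, shP d q' π σ p → asg d q' π σ u p = asg d q' π σ v p := by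
  constructor
  · intro h
    obtain ⟨w⟩ := h
    induction w with
    | nil => intro p hp; rfl
    | cons ha _ ih =>
        intro p hp
        exact (adj_agree d q' hq' π σ ha p hp).trans (ih p hp)
  · intro H
    match u, v with
    | Sum.inl x, Sum.inl x' =>
        have h1 : (connGraph d q' hq' π σ).Adj (Sum.inl x)
            (Sum.inr (mkR d q' σ (asg d q' π σ (Sum.inl x)))) :=
          Or.inl ⟨x, _, rfl, rfl, (connRel_iff d q' hq' π σ _ _).mpr
            fun p hp => (asg_mkR d q' π σ _ p hp.2).symm⟩
        have h2 : (connGraph d q' hq' π σ).Adj (Sum.inl x')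
            (Sum.inr (mkR d q' σ (asg d q' π σ (Sum.inl x)))) :=
          Or.inl ⟨x', _, rfl, rfl, (connRel_iff d q' hq' π σ _ _).mpr
            fun p hp => (H p hp).symm.trans (asg_mkR d q' π σ _ p hp.2).symm⟩
        exact h1.reachable.trans h2.reachable.symm
    | Sum.inl x, Sum.inr y =>
        exact SimpleGraph.Adj.reachable
          (Or.inl ⟨x, y, rfl, rfl, (connRel_iff d q' hq' π σ _ _).mpr H⟩)
    | Sum.inr y, Sum.inl x =>
        exact (SimpleGraph.Adj.reachable
          (Or.inl ⟨x, y, rfl, rfl, (connRel_iff d q' hq' π σ _ _).mpr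
            fun p hp => (H p hp).symm⟩)).symm
    | Sum.inr y, Sum.inr y' =>
        have h1 : (connGraph d q' hq' π σ).Adj
            (Sum.inl (mkL d q' π (asg d q' π σ (Sum.inr y)))) (Sum.inr y) :=
          Or.inl ⟨_, y, rfl, rfl, (connRel_iff d q' hq' π σ _ _).mpr
            fun p hp => asg_mkL d q' π σ _ p hp.1⟩
        have h2 : (connGraph d q' hq' π σ).Adj
            (Sum.inl (mkL d q' π (asg d q' π σ (Sum.inr y)))) (Sum.inr y') :=
          Or.inl ⟨_, y', rfl, rfl, (connRel_iff d q' hq' π σ _ _).mpr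
            fun p hp => (asg_mkL d q' π σ _ p hp.1).trans (H p hp)⟩
        exact h1.reachable.symm.trans h2.reachable

lemma asg_childV (d q : ℕ) (hq1 : 1 ≤ q) (hqd : q ≤ d)
    (π σ : Equiv.Perm (Fin d)) (u) (t : Bool) (p : Fin d)
    (hp : shP d q π σ p) :
    asg d (q - 1) π σ (childV d q u t) p = asg d q π σ u p := by
  obtain ⟨h1, h2⟩ := hp
  match u with
  | Sum.inl x =>
      have h1' : ((π.symm p : Fin d) : ℕ) < d - (q - 1) := by omega
      simp only [childV, asg, dif_pos h1, dif_pos h1', childL]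
  | Sum.inr y =>
      have h2' : q - 1 ≤ ((σ.symm p : Fin d) : ℕ) := by omega
      simp only [childV, asg, dif_pos h2, dif_pos h2', childR]
      rw [dif_pos (show 0 < ((⟨((σ.symm p : Fin d) : ℕ) - (q - 1), by
        have := (σ.symm p).isLt; omega⟩ : Fin (d - (q - 1))) : ℕ) by
          simp; omega)]
      congr 1
      exact Fin.ext (by simp; omega)

lemma childL_surj (d q : ℕ) (hq1 : 1 ≤ q) (hqd : q ≤ d)
    (x' : Fin (d - (q - 1)) → Bool) : ∃ x t, childL d q x t = x' := by
  refine ⟨fun k => x' ⟨(k : ℕ), by have := k.isLt; omega⟩,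
    x' ⟨d - q, by omega⟩, ?_⟩
  funext j
  by_cases h : (j : ℕ) < d - q
  · simp only [childL, dif_pos h]
  · simp only [childL, dif_neg h]
    congr 1
    exact Fin.ext (by have := j.isLt; simp; omega)

lemma childR_surj (d q : ℕ) (hq1 : 1 ≤ q) (hqd : q ≤ d)
    (y' : Fin (d - (q - 1)) → Bool) : ∃ y t, childR d q y t = y' := by
  refine ⟨fun k => y' ⟨(k : ℕ) + 1, by have := k.isLt; omega⟩,
    y' ⟨0, by omega⟩, ?_⟩
  funext j
  by_cases h : 0 < (j : ℕ)
  · simp only [childR, dif_pos h]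
    congr 1
    exact Fin.ext (by simp; omega)
  · simp only [childR, dif_neg h]
    congr 1
    exact Fin.ext (by simp; omega)

lemma bitVal_asg (d q : ℕ) (hq1 : 1 ≤ q) (hqd : q ≤ d)
    (π σ : Equiv.Perm (Fin d)) (i : Fin d) (w) :
    bitVal d q π σ i w = asg d (q - 1) π σ w i := by
  match w with
  | Sum.inl x' => rfl
  | Sum.inr y' =>
      simp only [bitVal, bitValR, asg]
      by_cases h : q - 1 ≤ ((σ.symm i : Fin d) : ℕ)
      · rw [dif_pos (⟨h, by have := (σ.symm i).isLt; omega⟩ :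
          q - 1 ≤ ((σ.symm i : Fin d) : ℕ) ∧ _), dif_pos h]
      · rw [dif_neg (fun hc => h hc.1), dif_neg h]

lemma key (d q : ℕ) (hq1 : 1 ≤ q) (hqd : q ≤ d) (π σ : Equiv.Perm (Fin d))
    (i : Fin d)
    (hi : (π ⟨d - q, by have := hq1; omega⟩ = i ∧ σ ⟨q - 1, by have := hq1; omega⟩ = i) ∨
      ((∃ k : Fin d, (k : ℕ) ≤ d - q ∧ π k = i) ∧ σ ⟨q - 1, by have := hq1; omega⟩ = i ∧
        (∀ k : Fin d, q - 1 ≤ (k : ℕ) → σ k ≠ π ⟨d - q, by have := hq1; omega⟩)) ∨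
      ((∃ k : Fin d, q - 1 ≤ (k : ℕ) ∧ σ k = i) ∧ π ⟨d - q, by have := hq1; omega⟩ = i ∧
        (∀ k : Fin d, (k : ℕ) ≤ d - q → π k ≠ σ ⟨q - 1, by have := hq1; omega⟩))) :
    shP d (q - 1) π σ i ∧ ¬ shP d q π σ i ∧
      ∀ p, shP d (q - 1) π σ p → p ≠ i → shP d q π σ p := by
  have hπs : ∀ a : Fin d, π a = i → π.symm i = a := fun a h => by
    rw [← h, Equiv.symm_apply_apply]
  have hσs : ∀ a : Fin d, σ a = i → σ.symm i = a := fun a h => by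
    rw [← h, Equiv.symm_apply_apply]
  rcases hi with ⟨ha, hb⟩ | ⟨⟨k, hk, hpk⟩, hb, hside⟩ | ⟨⟨k, hk, hsk⟩, ha, hside⟩
  · have h1 : ((π.symm i : Fin d) : ℕ) = d - q := by rw [hπs _ ha]
    have h2 : ((σ.symm i : Fin d) : ℕ) = q - 1 := by rw [hσs _ hb]
    refine ⟨⟨by omega, by omega⟩, by rintro ⟨c1, c2⟩; omega, ?_⟩
    rintro p ⟨c1, c2⟩ hpi
    have hπne : ((π.symm p : Fin d) : ℕ) ≠ d - q := by
      intro he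
      exact hpi (π.symm.injective (Fin.ext (by omega)))
    have hσne : ((σ.symm p : Fin d) : ℕ) ≠ q - 1 := by
      intro he
      exact hpi (σ.symm.injective (Fin.ext (by omega)))
    exact ⟨by omega, by omega⟩
  · have h1 : ((π.symm i : Fin d) : ℕ) = (k : ℕ) := by rw [hπs _ hpk]
    have h2 : ((σ.symm i : Fin d) : ℕ) = q - 1 := by rw [hσs _ hb]
    refine ⟨⟨by omega, by omega⟩, by rintro ⟨c1, c2⟩; omega, ?_⟩
    rintro p ⟨c1, c2⟩ hpi
    have hσne : ((σ.symm p : Fin d) : ℕ) ≠ q - 1 := by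
      intro he
      exact hpi (σ.symm.injective (Fin.ext (by omega)))
    have hπne : ((π.symm p : Fin d) : ℕ) ≠ d - q := by
      intro he
      have hpe : π ⟨d - q, by omega⟩ = p := by
        have : π.symm p = ⟨d - q, by omega⟩ := Fin.ext (by simpa using he)
        rw [← this, Equiv.apply_symm_apply]
      exact hside (σ.symm p) c2 (by rw [Equiv.apply_symm_apply, ← hpe])
    exact ⟨by omega, by omega⟩
  · have h1 : ((π.symm i : Fin d) : ℕ) = d - q := by rw [hπs _ ha]
    have h2 : ((σ.symm i : Fin d) : ℕ) = (k : ℕ) := by rw [hσs _ hsk]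
    refine ⟨⟨by omega, by omega⟩, by rintro ⟨c1, c2⟩; omega, ?_⟩
    rintro p ⟨c1, c2⟩ hpi
    have hπne : ((π.symm p : Fin d) : ℕ) ≠ d - q := by
      intro he
      exact hpi (π.symm.injective (Fin.ext (by omega)))
    have hσne : ((σ.symm p : Fin d) : ℕ) ≠ q - 1 := by
      intro he
      have hpe : σ ⟨q - 1, by omega⟩ = p := by
        have : σ.symm p = ⟨q - 1, by omega⟩ := Fin.ext (by simpa using he)
        rw [← this, Equiv.apply_symm_apply]
      exact hside (π.symm p) (by omega) (by rw [Equiv.apply_symm_apply, ← hpe])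
    exact ⟨by omega, by omega⟩

end OneReused

/-- one reused dimension: suppose `i` is the unique bit position
satisfying one of (`0`-based translations of the paper's `1`-based cases):
(a) `π (m+1) = σ q = i`; (b) `σ q = π j = i` for some `j ≤ m+1` and
`π (m+1) ∉ {σ q, …, σ d}`; (c) `π (m+1) = σ k = i` for some `k ∈ {q, …, d}`
and `σ q ∉ {π 1, …, π (m+1)}`.  Then for every connected component `C` of the
`q`-dimensional sub-butterfly connectivity graph, the children of the vertices
of `C` split into exactly two connected components of the `(q-1)`-dimensional
connectivity graph, determined by the value of bit `i`. -/
theorem connectivity_graph_component_one_reused_dimension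
    (d q : ℕ) (hq1 : 1 ≤ q) (hqd : q ≤ d) (π σ : Equiv.Perm (Fin d))
    (i : Fin d)
    (hi : (π ⟨d - q, by omega⟩ = i ∧ σ ⟨q - 1, by omega⟩ = i) ∨
      ((∃ k : Fin d, (k : ℕ) ≤ d - q ∧ π k = i) ∧ σ ⟨q - 1, by omega⟩ = i ∧
        (∀ k : Fin d, q - 1 ≤ (k : ℕ) → σ k ≠ π ⟨d - q, by omega⟩)) ∨
      ((∃ k : Fin d, q - 1 ≤ (k : ℕ) ∧ σ k = i) ∧ π ⟨d - q, by omega⟩ = i ∧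
        (∀ k : Fin d, (k : ℕ) ≤ d - q → π k ≠ σ ⟨q - 1, by omega⟩)))
    (huniq : ∀ i' : Fin d,
      ((π ⟨d - q, by omega⟩ = i' ∧ σ ⟨q - 1, by omega⟩ = i') ∨
        ((∃ k : Fin d, (k : ℕ) ≤ d - q ∧ π k = i') ∧ σ ⟨q - 1, by omega⟩ = i' ∧
          (∀ k : Fin d, q - 1 ≤ (k : ℕ) → σ k ≠ π ⟨d - q, by omega⟩)) ∨
        ((∃ k : Fin d, q - 1 ≤ (k : ℕ) ∧ σ k = i') ∧ π ⟨d - q, by omega⟩ = i' ∧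
          (∀ k : Fin d, (k : ℕ) ≤ d - q → π k ≠ σ ⟨q - 1, by omega⟩))) →
      i' = i) :
    ∀ C : (connGraph d q hqd π σ).ConnectedComponent,
      ∃ f : Bool → (connGraph d (q - 1) (by omega) π σ).ConnectedComponent,
        Function.Injective f ∧
        (∀ w, (∃ u ∈ C.supp, ∃ t : Bool, w = childV d q u t) ↔
          ∃ s : Bool, w ∈ (f s).supp) ∧
        (∀ w, (∃ u ∈ C.supp, ∃ t : Bool, w = childV d q u t) →
          ∀ s : Bool, (w ∈ (f s).supp ↔ bitVal d q π σ i w = s)) := by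
  clear huniq
  obtain ⟨hF1, hF2, hF3⟩ := OneReused.key d q hq1 hqd π σ i hi
  intro C
  obtain ⟨u₀, hu₀'⟩ := C.exists_rep
  have hu₀ : (connGraph d q hqd π σ).connectedComponentMk u₀ = C := hu₀'
  clear hu₀'
  have hq1d : q - 1 ≤ d := by omega
  set g : Bool → Fin d → Bool :=
    fun s p => if p = i then s else OneReused.asg d q π σ u₀ p with hg
  refine ⟨fun s => (connGraph d (q - 1) (by omega) π σ).connectedComponentMk
    (Sum.inl (OneReused.mkL d (q - 1) π (g s))), ?_, ?_, ?_⟩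
  all_goals
    have hreach : ∀ w s,
        w ∈ ((connGraph d (q - 1) (by omega : q - 1 ≤ d) π σ).connectedComponentMk
          (Sum.inl (OneReused.mkL d (q - 1) π (g s)))).supp ↔
        ∀ p, OneReused.shP d (q - 1) π σ p →
          OneReused.asg d (q - 1) π σ w p = g s p := by
      intro w s
      rw [SimpleGraph.ConnectedComponent.mem_supp_iff,
        SimpleGraph.ConnectedComponent.eq,
        OneReused.reach_iff d (q - 1) hq1d π σ]
      constructor
      · intro h p hp
        exact (h p hp).trans (OneReused.asg_mkL d (q - 1) π σ (g s) p hp.1)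
      · intro h p hp
        exact (h p hp).trans (OneReused.asg_mkL d (q - 1) π σ (g s) p hp.1).symm
    have hC : ∀ u, u ∈ C.supp ↔ ∀ p, OneReused.shP d q π σ p →
        OneReused.asg d q π σ u p = OneReused.asg d q π σ u₀ p := by
      intro u
      rw [← hu₀, SimpleGraph.ConnectedComponent.mem_supp_iff,
        SimpleGraph.ConnectedComponent.eq,
        OneReused.reach_iff d q hqd π σ]
  · -- injectivity
    intro s s' hss
    dsimp only at hss
    have h1 : (Sum.inl (OneReused.mkL d (q - 1) π (g s)) :
        (Fin (d - (q - 1)) → Bool) ⊕ (Fin (d - (q - 1)) → Bool)) ∈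
        ((connGraph d (q - 1) (by omega : q - 1 ≤ d) π σ).connectedComponentMk
          (Sum.inl (OneReused.mkL d (q - 1) π (g s')))).supp := by
      rw [← hss]
      exact SimpleGraph.ConnectedComponent.mem_supp_iff _ _ |>.mpr rfl
    have h2 := (hreach _ s').mp h1 i hF1
    rw [OneReused.asg_mkL d (q - 1) π σ (g s) i hF1.1] at h2
    simpa [hg] using h2
  all_goals
    have hchild : ∀ u ∈ C.supp, ∀ t : Bool, (childV d q u t) ∈
        ((connGraph d (q - 1) (by omega : q - 1 ≤ d) π σ).connectedComponentMk
          (Sum.inl (OneReused.mkL d (q - 1) π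
            (g (OneReused.asg d (q - 1) π σ (childV d q u t) i))))).supp := by
      intro u hu t
      rw [hreach]
      intro p hp
      by_cases hpi : p = i
      · subst hpi; simp [hg]
      · have hpq : OneReused.shP d q π σ p := hF3 p hp hpi
        rw [OneReused.asg_childV d q hq1 hqd π σ u t p hpq,
          (hC u).mp hu p hpq]
        simp [hg, hpi]
  · -- supp characterization
    intro w
    constructor
    · rintro ⟨u, hu, t, rfl⟩
      exact ⟨_, hchild u hu t⟩
    · rintro ⟨s, hs⟩
      have hw' := (hreach w s).mp hs
      obtain ⟨u, t, hut⟩ : ∃ u t, childV d q u t = w := by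
        match w with
        | Sum.inl x' =>
            obtain ⟨x, t, h⟩ := OneReused.childL_surj d q hq1 hqd x'
            exact ⟨Sum.inl x, t, congrArg Sum.inl h⟩
        | Sum.inr y' =>
            obtain ⟨y, t, h⟩ := OneReused.childR_surj d q hq1 hqd y'
            exact ⟨Sum.inr y, t, congrArg Sum.inr h⟩
      refine ⟨u, ?_, t, hut.symm⟩
      rw [hC]
      intro p hp
      have hp' : OneReused.shP d (q - 1) π σ p :=
        ⟨by have := hp.1; omega, by have := hp.2; omega⟩
      have hpi : p ≠ i := fun he => hF2 (he ▸ hp)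
      rw [← OneReused.asg_childV d q hq1 hqd π σ u t p hp, hut, hw' p hp']
      simp [hg, hpi]
  · -- bit value characterization
    intro w hw s
    constructor
    · intro hws
      have h2 := (hreach w s).mp hws i hF1
      rw [OneReused.bitVal_asg d q hq1 hqd π σ i w, h2]
      simp [hg]
    · intro hbv
      obtain ⟨u, hu, t, rfl⟩ := hw
      have h2 := hchild u hu t
      rwa [show OneReused.asg d (q - 1) π σ (childV d q u t) i = s from by
        rw [← OneReused.bitVal_asg d q hq1 hqd π σ i]; exact hbv] at h2
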